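/- Let X be a measurable space with σ-finite measure σ, p, n > 0, and H, w : X → [0,∞) measurable with ∫ H dσ < ∞ and ∫ w dσ < ∞ and w > 0 a.e. Then the infimum over all measurable g : X → ℝ with 0 < g < ∞ and ∫ g^p w dσ < ∞ of (∫_X g^{-n} H dσ)^{p/(n+p)} · (∫_X g^p w dσ)^{n/(n+p)} equals ∫_X H^{p/(n+p)} w^{n/(n+p)} dσ, and the infimum is attained in the limit along g_i = (H/w)^{1/(n+p)} suitably truncated; in particular the infimum is ≥ ∫_X H^{p/(n+p)} w^{n/(n+p)} dσ by Hölder's inequality and ≤ it by choosing g = (H/w)^{1/(n+p)} on {H > 0, w > 0} (with truncation). -/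

import Mathlib

open MeasureTheory Filter
open scoped ENNReal NNReal Topology

private lemma statement7_conj {p n : ℝ} (hp : 0 < p) (hn : 0 < n) :
    ((n + p) / p).HolderConjugate ((n + p) / n) := by
  have hnp : (0:ℝ) < n + p := by linarith
  constructor
  · rw [inv_div, inv_div, inv_one, ← add_div, add_comm p n, div_self hnp.ne']
  · positivity
  · positivity

private lemma statement7_holder {X : Type*} [MeasurableSpace X] (σ : Measure X) {p n : ℝ}
    (hp : 0 < p) (hn : 0 < n) {f h : X → ℝ≥0∞} (hf : Measurable f) (hh : Measurable h) :
    ∫⁻ x, f x ^ (p / (n + p)) * h x ^ (n / (n + p)) ∂σ ≤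
      (∫⁻ x, f x ∂σ) ^ (p / (n + p)) * (∫⁻ x, h x ∂σ) ^ (n / (n + p)) := by
  have hnp : (0:ℝ) < n + p := by linarith
  have key := ENNReal.lintegral_mul_le_Lp_mul_Lq σ (statement7_conj hp hn)
    (f := fun x => f x ^ (p / (n + p))) (g := fun x => h x ^ (n / (n + p)))
    (hf.pow_const _).aemeasurable (hh.pow_const _).aemeasurable
  have e1 : ∀ x : ℝ≥0∞, (x ^ (p / (n + p))) ^ ((n + p) / p) = x := fun x => by
    rw [← ENNReal.rpow_mul, show p / (n + p) * ((n + p) / p) = 1 by field_simp,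
      ENNReal.rpow_one]
  have e2 : ∀ x : ℝ≥0∞, (x ^ (n / (n + p))) ^ ((n + p) / n) = x := fun x => by
    rw [← ENNReal.rpow_mul, show n / (n + p) * ((n + p) / n) = 1 by field_simp,
      ENNReal.rpow_one]
  simpa only [Pi.mul_apply, e1, e2, one_div_div] using key

theorem statement7 {X : Type*} [MeasurableSpace X] (σ : Measure X) [SigmaFinite σ]
    (p n : ℝ) (hp : 0 < p) (hn : 0 < n)
    (H w : X → ℝ≥0∞) (hH : Measurable H) (hw : Measurable w)
    (hHint : ∫⁻ x, H x ∂σ < ⊤) (hwint : ∫⁻ x, w x ∂σ < ⊤)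
    (hwpos : ∀ᵐ x ∂σ, 0 < w x) (hwfin : ∀ᵐ x ∂σ, w x < ⊤) :
    sInf {v : ℝ≥0∞ | ∃ g : X → ℝ≥0∞, Measurable g ∧ (∀ x, 0 < g x ∧ g x < ⊤) ∧
        (∫⁻ x, g x ^ p * w x ∂σ) < ⊤ ∧
        v = (∫⁻ x, g x ^ (-n) * H x ∂σ) ^ (p / (n + p)) *
            (∫⁻ x, g x ^ p * w x ∂σ) ^ (n / (n + p))} =
      ∫⁻ x, H x ^ (p / (n + p)) * w x ^ (n / (n + p)) ∂σ := by
  have hnp : (0:ℝ) < n + p := by linarith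
  set α := p / (n + p) with hα
  set β := n / (n + p) with hβ
  have hα0 : 0 < α := by positivity
  have hβ0 : 0 < β := by positivity
  have hαβ : α + β = 1 := by rw [hα, hβ]; field_simp; ring
  have hHfin : ∀ᵐ x ∂σ, H x < ⊤ := ae_lt_top hH hHint.ne
  have hIle : ∫⁻ x, H x ^ α * w x ^ β ∂σ ≤
      (∫⁻ x, H x ∂σ) ^ α * (∫⁻ x, w x ∂σ) ^ β := statement7_holder σ hp hn hH hw
  have hIfin : ∫⁻ x, H x ^ α * w x ^ β ∂σ < ⊤ :=
    lt_of_le_of_lt hIle (ENNReal.mul_lt_top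
      (ENNReal.rpow_lt_top_of_nonneg hα0.le hHint.ne)
      (ENNReal.rpow_lt_top_of_nonneg hβ0.le hwint.ne))
  refine le_antisymm ?_ ?_
  · -- upper bound: sInf ≤ ∫ H^α w^β, via truncated optimizer
    set a : X → ℝ≥0∞ := fun x => (H x / w x) ^ ((n + p)⁻¹) with ha
    have hameas : Measurable a := (hH.div hw).pow_const _
    set G : ℕ → X → ℝ≥0∞ := fun k x => min ((k:ℝ≥0∞) + 1) (max ((k:ℝ≥0∞) + 1)⁻¹ (a x))
      with hGdef
    have hktop : ∀ k : ℕ, ((k:ℝ≥0∞) + 1) ≠ ⊤ := fun k =>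
      ENNReal.add_ne_top.mpr ⟨ENNReal.natCast_ne_top k, ENNReal.one_ne_top⟩
    have hk1 : ∀ k : ℕ, (1:ℝ≥0∞) ≤ (k:ℝ≥0∞) + 1 := fun k => le_add_self
    have hGmeas : ∀ k, Measurable (G k) := fun k =>
      measurable_const.min (measurable_const.max hameas)
    have hGpos : ∀ k, ∀ x, 0 < G k x ∧ G k x < ⊤ := by
      intro k x
      constructor
      · exact lt_min (lt_of_lt_of_le zero_lt_one (hk1 k))
          (lt_max_of_lt_left (ENNReal.inv_pos.mpr (hktop k)))
      · exact lt_of_le_of_lt (min_le_left _ _) (lt_top_iff_ne_top.mpr (hktop k))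
    have hBfin : ∀ k, ∫⁻ x, G k x ^ p * w x ∂σ < ⊤ := by
      intro k
      calc ∫⁻ x, G k x ^ p * w x ∂σ ≤ ∫⁻ x, ((k:ℝ≥0∞) + 1) ^ p * w x ∂σ := by
            refine lintegral_mono fun x => ?_
            exact mul_le_mul_left (ENNReal.rpow_le_rpow (min_le_left _ _) hp.le) _
        _ = ((k:ℝ≥0∞) + 1) ^ p * ∫⁻ x, w x ∂σ := lintegral_const_mul _ hw
        _ < ⊤ := ENNReal.mul_lt_top
            (ENNReal.rpow_lt_top_of_nonneg hp.le (hktop k)) hwint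
    have hae : ∀ᵐ x ∂σ, 0 < w x ∧ w x < ⊤ ∧ H x < ⊤ := by
      filter_upwards [hwpos, hwfin, hHfin] with x h1 h2 h3
      exact ⟨h1, h2, h3⟩
    -- key pointwise identities on the good set
    have fact2 : ∀ x, 0 < w x → w x < ⊤ → a x ^ p * w x = H x ^ α * w x ^ β := by
      intro x hw0 hwt
      have h1 : a x ^ p = (H x / w x) ^ α := by
        rw [ha, ← ENNReal.rpow_mul, hα]
        congr 1
        field_simp
      rw [h1, ENNReal.div_rpow_of_nonneg _ _ hα0.le, div_eq_mul_inv, ← ENNReal.rpow_neg,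
        mul_assoc]
      congr 1
      calc w x ^ (-α) * w x = w x ^ (-α) * w x ^ (1:ℝ) := by rw [ENNReal.rpow_one]
        _ = w x ^ (-α + 1) := (ENNReal.rpow_add _ _ hw0.ne' hwt.ne).symm
        _ = w x ^ β := by congr 1; rw [hα, hβ]; field_simp; ring
    have fact1 : ∀ x, 0 < w x → w x < ⊤ → H x < ⊤ →
        a x ^ (-n) * H x = H x ^ α * w x ^ β := by
      intro x hw0 hwt hHt
      rcases eq_or_ne (H x) 0 with hH0 | hH0
      · rw [hH0, mul_zero, ENNReal.zero_rpow_of_pos hα0, zero_mul]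
      · have h1 : a x ^ (-n) = (H x / w x) ^ (-β) := by
          rw [ha, ← ENNReal.rpow_mul, hβ]
          congr 1
          field_simp
        have hHw0 : H x / w x ≠ 0 := by
          simp [ENNReal.div_eq_zero_iff, hH0, hwt.ne]
        have hwbt : w x ^ β ≠ ⊤ := (ENNReal.rpow_lt_top_of_nonneg hβ0.le hwt.ne).ne
        have hwb0 : w x ^ β ≠ 0 := by
          simp [ENNReal.rpow_eq_zero_iff, hw0.ne', hwt.ne, not_lt.mpr hβ0.le]
        have hsub : H x ^ (-β) * H x = H x ^ α := by
          calc H x ^ (-β) * H x = H x ^ (-β) * H x ^ (1:ℝ) := by rw [ENNReal.rpow_one]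
            _ = H x ^ (-β + 1) := (ENNReal.rpow_add _ _ hH0 hHt.ne).symm
            _ = H x ^ α := by congr 1; rw [hα, hβ]; field_simp; ring
        rw [h1, ENNReal.rpow_neg, ENNReal.div_rpow_of_nonneg _ _ hβ0.le,
          ENNReal.inv_div (Or.inl hwbt) (Or.inl hwb0),
          div_eq_mul_inv, ← ENNReal.rpow_neg, mul_assoc, hsub, mul_comm]
    have haux : ∀ x, 0 < w x → w x < ⊤ → H x < ⊤ → H x ≠ 0 → a x ≠ 0 ∧ a x ≠ ⊤ := by
      intro x hw0 hwt hHt hH0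
      have hdiv0 : H x / w x ≠ 0 := by simp [ENNReal.div_eq_zero_iff, hH0, hwt.ne]
      have hdivt : H x / w x ≠ ⊤ := by simp [ENNReal.div_eq_top, hHt.ne, hw0.ne']
      constructor
      · simp [ha, ENNReal.rpow_eq_zero_iff, hdiv0, hdivt]
      · simp [ha, ENNReal.rpow_eq_top_iff, hdiv0, hdivt]
    have hev : ∀ x, a x ≠ 0 → a x ≠ ⊤ → ∀ᶠ k in atTop, G k x = a x := by
      intro x ha0 hat
      obtain ⟨k1, hk1'⟩ := ENNReal.exists_inv_nat_lt ha0
      obtain ⟨k2, hk2'⟩ := ENNReal.exists_nat_gt hat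
      filter_upwards [eventually_ge_atTop (max k1 k2)] with k hk
      have hcast1 : (k1:ℝ≥0∞) ≤ (k:ℝ≥0∞) + 1 :=
        le_trans (Nat.cast_le.mpr ((le_max_left k1 k2).trans hk)) le_self_add
      have hcast2 : (k2:ℝ≥0∞) ≤ (k:ℝ≥0∞) + 1 :=
        le_trans (Nat.cast_le.mpr ((le_max_right k1 k2).trans hk)) le_self_add
      have h1 : ((k:ℝ≥0∞) + 1)⁻¹ ≤ a x :=
        le_trans (ENNReal.inv_le_inv.mpr hcast1) hk1'.le
      have h2 : a x ≤ (k:ℝ≥0∞) + 1 := hk2'.le.trans hcast2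
      rw [hGdef]
      simp only [max_eq_right h1, min_eq_right h2]
    -- dominated convergence for numerator integrals
    have hA : Tendsto (fun k => ∫⁻ x, G k x ^ (-n) * H x ∂σ) atTop
        (𝓝 (∫⁻ x, H x ^ α * w x ^ β ∂σ)) := by
      apply tendsto_lintegral_of_dominated_convergence
        (fun x => H x + H x ^ α * w x ^ β)
        (fun k => ((hGmeas k).pow_const _).mul hH)
      · intro k
        filter_upwards [hae] with x ⟨hw0, hwt, hHt⟩
        have hGe : min 1 (a x) ≤ G k x :=
          le_min ((min_le_left _ _).trans (hk1 k))
            ((min_le_right _ _).trans (le_max_right _ _))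
        have hmono : G k x ^ (-n) ≤ (min 1 (a x)) ^ (-n) := by
          rw [ENNReal.rpow_neg, ENNReal.rpow_neg]
          exact ENNReal.inv_le_inv.mpr (ENNReal.rpow_le_rpow hGe hn.le)
        refine le_trans (mul_le_mul_left hmono _) ?_
        rcases le_total (1:ℝ≥0∞) (a x) with hle | hle
        · rw [min_eq_left hle, ENNReal.one_rpow, one_mul]
          exact le_add_right le_rfl
        · rw [min_eq_right hle, fact1 x hw0 hwt hHt]
          exact le_add_left le_rfl
      · rw [lintegral_add_left hH]
        exact ENNReal.add_ne_top.mpr ⟨hHint.ne, hIfin.ne⟩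
      · filter_upwards [hae] with x ⟨hw0, hwt, hHt⟩
        rcases eq_or_ne (H x) 0 with hH0 | hH0
        · simp only [Pi.mul_apply, hH0, mul_zero, ENNReal.zero_rpow_of_pos hα0, zero_mul]
          exact tendsto_const_nhds
        · obtain ⟨ha0, hat⟩ := haux x hw0 hwt hHt hH0
          refine Tendsto.congr' ?_ (tendsto_const_nhds (x := H x ^ α * w x ^ β))
          filter_upwards [hev x ha0 hat] with k hk
          simp only [Pi.mul_apply]; rw [hk, fact1 x hw0 hwt hHt]
    have hB : Tendsto (fun k => ∫⁻ x, G k x ^ p * w x ∂σ) atTop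
        (𝓝 (∫⁻ x, H x ^ α * w x ^ β ∂σ)) := by
      apply tendsto_lintegral_of_dominated_convergence
        (fun x => w x + H x ^ α * w x ^ β)
        (fun k => ((hGmeas k).pow_const _).mul hw)
      · intro k
        filter_upwards [hae] with x ⟨hw0, hwt, hHt⟩
        have hGle : G k x ≤ max 1 (a x) :=
          (min_le_right _ _).trans (max_le_max (ENNReal.inv_le_one.mpr (hk1 k)) le_rfl)
        have hmono : G k x ^ p ≤ (max 1 (a x)) ^ p := ENNReal.rpow_le_rpow hGle hp.le
        refine le_trans (mul_le_mul_left hmono _) ?_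
        rcases le_total (a x) (1:ℝ≥0∞) with hle | hle
        · rw [max_eq_left hle, ENNReal.one_rpow, one_mul]
          exact le_add_right le_rfl
        · rw [max_eq_right hle, fact2 x hw0 hwt]
          exact le_add_left le_rfl
      · rw [lintegral_add_left hw]
        exact ENNReal.add_ne_top.mpr ⟨hwint.ne, hIfin.ne⟩
      · filter_upwards [hae] with x ⟨hw0, hwt, hHt⟩
        rcases eq_or_ne (H x) 0 with hH0 | hH0
        · have ha0 : a x = 0 := by
            simp only [ha, hH0, ENNReal.zero_div]
            exact ENNReal.zero_rpow_of_pos (inv_pos.mpr hnp)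
          have hGeq : ∀ k : ℕ, G k x = ((k:ℝ≥0∞) + 1)⁻¹ := by
            intro k
            simp only [hGdef, ha0]
            rw [max_eq_left zero_le,
              min_eq_right ((ENNReal.inv_le_one.mpr (hk1 k)).trans (hk1 k))]
          have hφ0 : H x ^ α * w x ^ β = 0 := by
            rw [hH0, ENNReal.zero_rpow_of_pos hα0, zero_mul]
          rw [hφ0]
          have h1 : Tendsto (fun k : ℕ => ((k:ℝ≥0∞) + 1)⁻¹) atTop (𝓝 0) := by
            have : Tendsto (fun k : ℕ => ((k:ℝ≥0∞) + 1)) atTop (𝓝 ⊤) :=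
              tendsto_nhds_top_mono ENNReal.tendsto_nat_nhds_top
                (Eventually.of_forall fun k => le_self_add)
            simpa using ENNReal.tendsto_inv_iff.mpr this
          have h2 : Tendsto (fun k : ℕ => (((k:ℝ≥0∞) + 1)⁻¹) ^ p) atTop (𝓝 0) := by
            have := (ENNReal.continuous_rpow_const (y := p)).tendsto 0
            have h3 := this.comp h1
            simpa [ENNReal.zero_rpow_of_pos hp, Function.comp_def] using h3
          have h4 := ENNReal.Tendsto.mul_const h2 (Or.inr hwt.ne)
          rw [zero_mul] at h4
          refine Tendsto.congr (fun k => ?_) h4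
          simp only [Pi.mul_apply]; rw [hGeq k]
        · obtain ⟨ha0, hat⟩ := haux x hw0 hwt hHt hH0
          refine Tendsto.congr' ?_ (tendsto_const_nhds (x := H x ^ α * w x ^ β))
          filter_upwards [hev x ha0 hat] with k hk
          simp only [Pi.mul_apply]; rw [hk, fact2 x hw0 hwt]
    have hv : Tendsto (fun k => (∫⁻ x, G k x ^ (-n) * H x ∂σ) ^ α *
        (∫⁻ x, G k x ^ p * w x ∂σ) ^ β) atTop
        (𝓝 ((∫⁻ x, H x ^ α * w x ^ β ∂σ) ^ α * (∫⁻ x, H x ^ α * w x ^ β ∂σ) ^ β)) := by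
      refine ENNReal.Tendsto.mul
        (((ENNReal.continuous_rpow_const (y := α)).tendsto _).comp hA)
        (Or.inr (ENNReal.rpow_lt_top_of_nonneg hβ0.le hIfin.ne).ne)
        (((ENNReal.continuous_rpow_const (y := β)).tendsto _).comp hB)
        (Or.inr (ENNReal.rpow_lt_top_of_nonneg hα0.le hIfin.ne).ne)
    have hIeq : (∫⁻ x, H x ^ α * w x ^ β ∂σ) ^ α * (∫⁻ x, H x ^ α * w x ^ β ∂σ) ^ β
        = ∫⁻ x, H x ^ α * w x ^ β ∂σ := by
      rw [← ENNReal.rpow_add_of_nonneg _ _ hα0.le hβ0.le, hαβ, ENNReal.rpow_one]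
    rw [hIeq] at hv
    refine ge_of_tendsto hv ?_
    filter_upwards with k
    exact sInf_le ⟨G k, hGmeas k, hGpos k, hBfin k, rfl⟩
  · -- lower bound: Hölder
    refine le_sInf ?_
    rintro v ⟨g, hgmeas, hgpos, hgint, rfl⟩
    have hpt : ∀ x, H x ^ α * w x ^ β = (g x ^ (-n) * H x) ^ α * (g x ^ p * w x) ^ β := by
      intro x
      obtain ⟨hg0, hgt⟩ := hgpos x
      rw [ENNReal.mul_rpow_of_nonneg _ _ hα0.le, ENNReal.mul_rpow_of_nonneg _ _ hβ0.le,
        ← ENNReal.rpow_mul, ← ENNReal.rpow_mul]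
      have hre : g x ^ (-n * α) * H x ^ α * (g x ^ (p * β) * w x ^ β)
          = g x ^ (-n * α) * g x ^ (p * β) * (H x ^ α * w x ^ β) := by ring
      rw [hre, ← ENNReal.rpow_add _ _ hg0.ne' hgt.ne,
        show -n * α + p * β = 0 by rw [hα, hβ]; field_simp; ring,
        ENNReal.rpow_zero, one_mul]
    calc ∫⁻ x, H x ^ α * w x ^ β ∂σ
        = ∫⁻ x, (g x ^ (-n) * H x) ^ α * (g x ^ p * w x) ^ β ∂σ :=
          lintegral_congr fun x => hpt x
      _ ≤ _ := statement7_holder σ hp hn ((hgmeas.pow_const _).mul hH)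
          ((hgmeas.pow_const _).mul hw)
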